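/- Counterexample construction fails for the naive approach: there exists a simplicial subdivision of the unit simplex in $\mathbb{R}^3$ with a Sperner labeling and a point $x$ such that $x$ lies in a simplex of the subdivision carrying label $i$ for every $i \in \{1,2,3\}$, yet $x$ does not lie in any completely labeled simplex of the subdivision. -/

import Mathlib

open Finset

/-- `𝒮` is a simplicial subdivision of the unit simplex in `ℝ^n`: a finite collection of
`(n-1)`-simplices (each given by its `n` affinely independent vertices, lying in the unit
simplex) whose union is the unit simplex, and such that the intersection of any two of
them is empty or a common face. -/
def IsSubdivision (n : ℕ) (𝒮 : Finset (Finset (Fin n → ℝ))) : Prop :=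
  (∀ S ∈ 𝒮, S.card = n ∧ AffineIndependent ℝ ((↑) : S → (Fin n → ℝ)) ∧
    (↑S : Set (Fin n → ℝ)) ⊆ stdSimplex ℝ (Fin n)) ∧
  (⋃ S ∈ 𝒮, convexHull ℝ (↑S : Set (Fin n → ℝ))) = stdSimplex ℝ (Fin n) ∧
  (∀ S ∈ 𝒮, ∀ T ∈ 𝒮,
    convexHull ℝ (↑S : Set (Fin n → ℝ)) ∩ convexHull ℝ (↑T : Set (Fin n → ℝ)) = ∅ ∨
    ∃ F : Finset (Fin n → ℝ), F ⊆ S ∧ F ⊆ T ∧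
      convexHull ℝ (↑S : Set (Fin n → ℝ)) ∩ convexHull ℝ (↑T : Set (Fin n → ℝ)) =
        convexHull ℝ (↑F : Set (Fin n → ℝ)))

/-- `ℓ` is a Sperner labeling of the vertices of the subdivision `𝒮`: each vertex `v`
gets a label `ℓ v` with `v (ℓ v) > 0`. -/
def IsSpernerLabeling (n : ℕ) (𝒮 : Finset (Finset (Fin n → ℝ)))
    (ℓ : (Fin n → ℝ) → Fin n) : Prop :=
  ∀ S ∈ 𝒮, ∀ v ∈ S, 0 < v (ℓ v)

/-- A simplex `S` of the subdivision is completely labeled: its vertices carry all `n` labels. -/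
def IsCompletelyLabeled (n : ℕ) (S : Finset (Fin n → ℝ))
    (ℓ : (Fin n → ℝ) → Fin n) : Prop :=
  ∀ i : Fin n, ∃ v ∈ S, ℓ v = i

/-- The naive approach fails: there is a simplicial subdivision of the unit simplex in
`ℝ³` with a Sperner labeling and a point `x` such that for every label `i`, `x` lies in
some simplex of the subdivision carrying label `i`, yet `x` lies in no completely labeled
simplex of the subdivision. -/

lemma hull_le {s : Set (Fin 3 → ℝ)} (c0 c1 c2 d : ℝ)
    (h : ∀ y ∈ s, c0 * y 0 + c1 * y 1 + c2 * y 2 ≤ d) :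
    ∀ z ∈ convexHull ℝ s, c0 * z 0 + c1 * z 1 + c2 * z 2 ≤ d := by
  have hc : Convex ℝ {y : Fin 3 → ℝ | c0 * y 0 + c1 * y 1 + c2 * y 2 ≤ d} := by
    intro u hu v hv a b ha hb hab
    simp only [Set.mem_setOf_eq] at *
    have e0 : (a • u + b • v) 0 = a * u 0 + b * v 0 := rfl
    have e1 : (a • u + b • v) 1 = a * u 1 + b * v 1 := rfl
    have e2 : (a • u + b • v) 2 = a * u 2 + b * v 2 := rfl
    rw [e0, e1, e2]
    calc c0 * (a * u 0 + b * v 0) + c1 * (a * u 1 + b * v 1) + c2 * (a * u 2 + b * v 2)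
        = a * (c0 * u 0 + c1 * u 1 + c2 * u 2) + b * (c0 * v 0 + c1 * v 1 + c2 * v 2) := by ring
      _ ≤ a * d + b * d := add_le_add (mul_le_mul_of_nonneg_left hu ha)
          (mul_le_mul_of_nonneg_left hv hb)
      _ = d := by rw [← add_mul, hab, one_mul]
  exact fun z hz => convexHull_min h hc hz

lemma mem_convexHull_triple {P Q R z : Fin 3 → ℝ} {a b c : ℝ}
    (ha : 0 ≤ a) (hb : 0 ≤ b) (hc : 0 ≤ c) (habc : a + b + c = 1)
    (hz : a • P + b • Q + c • R = z) :
    z ∈ convexHull ℝ ({P, Q, R} : Set (Fin 3 → ℝ)) := by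
  have key := (convex_convexHull ℝ ({P, Q, R} : Set (Fin 3 → ℝ))).sum_mem
    (t := Finset.univ) (w := ![a, b, c]) (z := ![P, Q, R])
    (by intro i _; fin_cases i <;> assumption)
    (by rw [Fin.sum_univ_three]; simpa using habc)
    (by intro i _; fin_cases i <;> exact subset_convexHull ℝ _ (by simp))
  have hs : ∑ i : Fin 3, ![a, b, c] i • ![P, Q, R] i = a • P + b • Q + c • R := by
    rw [Fin.sum_univ_three]; simp
  rw [hs, hz] at key
  exact key

lemma mem_convexHull_pair {P Q z : Fin 3 → ℝ} {a b : ℝ}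
    (ha : 0 ≤ a) (hb : 0 ≤ b) (hab : a + b = 1)
    (hz : a • P + b • Q = z) :
    z ∈ convexHull ℝ ({P, Q} : Set (Fin 3 → ℝ)) := by
  have key := (convex_convexHull ℝ ({P, Q} : Set (Fin 3 → ℝ))).sum_mem
    (t := Finset.univ) (w := ![a, b]) (z := ![P, Q])
    (by intro i _; fin_cases i <;> assumption)
    (by rw [Fin.sum_univ_two]; simpa using hab)
    (by intro i _; fin_cases i <;> exact subset_convexHull ℝ _ (by simp))
  have hs : ∑ i : Fin 2, ![a, b] i • ![P, Q] i = a • P + b • Q := by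
    rw [Fin.sum_univ_two]; simp
  rw [hs, hz] at key
  exact key

lemma affineIndependent_triple {P Q R : Fin 3 → ℝ}
    (h : ∀ a b c : ℝ, a + b + c = 0 → a • P + b • Q + c • R = 0 →
      a = 0 ∧ b = 0 ∧ c = 0) :
    AffineIndependent ℝ ![P, Q, R] := by
  rw [affineIndependent_iff]
  intro s w hw0 hws e he
  set w' : Fin 3 → ℝ := fun i => if i ∈ s then w i else 0 with hw'
  have hsum : w' 0 + w' 1 + w' 2 = 0 := by
    have h1 : ∑ i : Fin 3, w' i = ∑ e ∈ s, w e := by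
      rw [hw']
      rw [Finset.sum_ite_mem, Finset.univ_inter]
    rw [Fin.sum_univ_three] at h1
    rw [h1, hw0]
  have hvec : w' 0 • P + w' 1 • Q + w' 2 • R = 0 := by
    have h1 : ∑ i : Fin 3, w' i • ![P, Q, R] i = ∑ e ∈ s, w e • ![P, Q, R] e := by
      rw [hw']
      simp only [ite_smul, zero_smul]
      rw [Finset.sum_ite_mem, Finset.univ_inter]
    rw [Fin.sum_univ_three] at h1
    simp only [Matrix.cons_val_zero, Matrix.cons_val_one, Matrix.head_cons,
      Matrix.cons_val_two, Matrix.tail_cons] at h1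
    rw [h1, hws]
  obtain ⟨h0, h1, h2⟩ := h _ _ _ hsum hvec
  have hz : w' e = 0 := by fin_cases e <;> assumption
  rw [hw'] at hz
  simpa [he] using hz
noncomputable section

def V1 : Fin 3 → ℝ := ![1, 0, 0]
def V2 : Fin 3 → ℝ := ![0, 1, 0]
def V3 : Fin 3 → ℝ := ![0, 0, 1]
def VM : Fin 3 → ℝ := ![1/2, 1/2, 0]
def VP : Fin 3 → ℝ := ![1/4, 1/4, 1/2]

lemma ne_V2V3 : V2 ≠ V3 := by
  intro h; have := congrFun h 1; norm_num [V2, V3] at this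
lemma ne_V1V2 : V1 ≠ V2 := by
  intro h; have := congrFun h 0; norm_num [V1, V2] at this
lemma ne_V1V3 : V1 ≠ V3 := by
  intro h; have := congrFun h 0; norm_num [V1, V3] at this
lemma ne_V1VM : V1 ≠ VM := by
  intro h; have := congrFun h 0; norm_num [V1, VM] at this
lemma ne_V1VP : V1 ≠ VP := by
  intro h; have := congrFun h 0; norm_num [V1, VP] at this
lemma ne_V2VM : V2 ≠ VM := by
  intro h; have := congrFun h 0; norm_num [V2, VM] at this
lemma ne_V2VP : V2 ≠ VP := by
  intro h; have := congrFun h 0; norm_num [V2, VP] at this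
lemma ne_V3VM : V3 ≠ VM := by
  intro h; have := congrFun h 0; norm_num [V3, VM] at this
lemma ne_V3VP : V3 ≠ VP := by
  intro h; have := congrFun h 0; norm_num [V3, VP] at this
lemma ne_VMVP : VM ≠ VP := by
  intro h; have := congrFun h 0; norm_num [VM, VP] at this
end
noncomputable section

lemma memA {y : Fin 3 → ℝ} :
    y ∈ convexHull ℝ ({V1, VM, VP} : Set (Fin 3 → ℝ)) ↔
      y 0 + y 1 + y 2 = 1 ∧ 0 ≤ y 2 ∧ y 2 ≤ 2 * y 1 ∧ 2 * y 1 + y 2 ≤ 1 := by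
  constructor
  · intro hy
    have key : ∀ c0 c1 c2 d : ℝ, c0 ≤ d → c0/2 + c1/2 ≤ d → c0/4 + c1/4 + c2/2 ≤ d →
        c0 * y 0 + c1 * y 1 + c2 * y 2 ≤ d := by
      intro c0 c1 c2 d h1 h2 h3
      refine hull_le c0 c1 c2 d (fun z hz => ?_) y hy
      simp only [Set.mem_insert_iff, Set.mem_singleton_iff] at hz
      rcases hz with rfl | rfl | rfl <;> simp [V1, VM, VP] <;> linarith
    have k1 := key 1 1 1 1 (by norm_num) (by norm_num) (by norm_num)
    have k2 := key (-1) (-1) (-1) (-1) (by norm_num) (by norm_num) (by norm_num)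
    have k3 := key 0 0 (-1) 0 (by norm_num) (by norm_num) (by norm_num)
    have k4 := key 0 (-2) 1 0 (by norm_num) (by norm_num) (by norm_num)
    have k5 := key 0 2 1 1 (by norm_num) (by norm_num) (by norm_num)
    refine ⟨by linarith, by linarith, by linarith, by linarith⟩
  · rintro ⟨hs, h1, h2, h3⟩
    exact mem_convexHull_triple (a := 1 - 2*y 1 - y 2) (b := 2*y 1 - y 2) (c := 2*y 2)
      (by linarith) (by linarith) (by linarith) (by ring)
      (by funext i; fin_cases i <;> simp [V1, VM, VP] <;> linarith)
end
noncomputable section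

lemma memB {y : Fin 3 → ℝ} :
    y ∈ convexHull ℝ ({V2, VM, VP} : Set (Fin 3 → ℝ)) ↔
      y 0 + y 1 + y 2 = 1 ∧ 0 ≤ y 2 ∧ 1 ≤ 2 * y 1 + y 2 ∧ 2 * y 1 + 3 * y 2 ≤ 2 := by
  constructor
  · intro hy
    have key : ∀ c0 c1 c2 d : ℝ, c1 ≤ d → c0/2 + c1/2 ≤ d → c0/4 + c1/4 + c2/2 ≤ d →
        c0 * y 0 + c1 * y 1 + c2 * y 2 ≤ d := by
      intro c0 c1 c2 d h1 h2 h3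
      refine hull_le c0 c1 c2 d (fun z hz => ?_) y hy
      simp only [Set.mem_insert_iff, Set.mem_singleton_iff] at hz
      rcases hz with rfl | rfl | rfl <;> simp [V2, VM, VP] <;> linarith
    have k1 := key 1 1 1 1 (by norm_num) (by norm_num) (by norm_num)
    have k2 := key (-1) (-1) (-1) (-1) (by norm_num) (by norm_num) (by norm_num)
    have k3 := key 0 0 (-1) 0 (by norm_num) (by norm_num) (by norm_num)
    have k4 := key 0 (-2) (-1) (-1) (by norm_num) (by norm_num) (by norm_num)
    have k5 := key 0 2 3 2 (by norm_num) (by norm_num) (by norm_num)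
    refine ⟨by linarith, by linarith, by linarith, by linarith⟩
  · rintro ⟨hs, h1, h2, h3⟩
    exact mem_convexHull_triple (a := 2*y 1 + y 2 - 1) (b := 2 - 2*y 1 - 3*y 2) (c := 2*y 2)
      (by linarith) (by linarith) (by linarith) (by ring)
      (by funext i; fin_cases i <;> simp [V2, VM, VP] <;> linarith)

lemma memC {y : Fin 3 → ℝ} :
    y ∈ convexHull ℝ ({V1, VP, V3} : Set (Fin 3 → ℝ)) ↔
      y 0 + y 1 + y 2 = 1 ∧ 0 ≤ y 1 ∧ 2 * y 1 ≤ y 2 ∧ 2 * y 1 + y 2 ≤ 1 := by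
  constructor
  · intro hy
    have key : ∀ c0 c1 c2 d : ℝ, c0 ≤ d → c0/4 + c1/4 + c2/2 ≤ d → c2 ≤ d →
        c0 * y 0 + c1 * y 1 + c2 * y 2 ≤ d := by
      intro c0 c1 c2 d h1 h2 h3
      refine hull_le c0 c1 c2 d (fun z hz => ?_) y hy
      simp only [Set.mem_insert_iff, Set.mem_singleton_iff] at hz
      rcases hz with rfl | rfl | rfl <;> simp [V1, VP, V3] <;> linarith
    have k1 := key 1 1 1 1 (by norm_num) (by norm_num) (by norm_num)
    have k2 := key (-1) (-1) (-1) (-1) (by norm_num) (by norm_num) (by norm_num)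
    have k3 := key 0 (-1) 0 0 (by norm_num) (by norm_num) (by norm_num)
    have k4 := key 0 2 (-1) 0 (by norm_num) (by norm_num) (by norm_num)
    have k5 := key 0 2 1 1 (by norm_num) (by norm_num) (by norm_num)
    refine ⟨by linarith, by linarith, by linarith, by linarith⟩
  · rintro ⟨hs, h1, h2, h3⟩
    exact mem_convexHull_triple (a := 1 - 2*y 1 - y 2) (b := 4*y 1) (c := y 2 - 2*y 1)
      (by linarith) (by linarith) (by linarith) (by ring)
      (by funext i; fin_cases i <;> simp [V1, VP, V3] <;> linarith)

lemma memD {y : Fin 3 → ℝ} :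
    y ∈ convexHull ℝ ({V2, VP, V3} : Set (Fin 3 → ℝ)) ↔
      y 0 + y 1 + y 2 = 1 ∧ 1 ≤ 2 * y 1 + y 2 ∧ 2 ≤ 2 * y 1 + 3 * y 2 ∧ y 1 + y 2 ≤ 1 := by
  constructor
  · intro hy
    have key : ∀ c0 c1 c2 d : ℝ, c1 ≤ d → c0/4 + c1/4 + c2/2 ≤ d → c2 ≤ d →
        c0 * y 0 + c1 * y 1 + c2 * y 2 ≤ d := by
      intro c0 c1 c2 d h1 h2 h3
      refine hull_le c0 c1 c2 d (fun z hz => ?_) y hy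
      simp only [Set.mem_insert_iff, Set.mem_singleton_iff] at hz
      rcases hz with rfl | rfl | rfl <;> simp [V2, VP, V3] <;> linarith
    have k1 := key 1 1 1 1 (by norm_num) (by norm_num) (by norm_num)
    have k2 := key (-1) (-1) (-1) (-1) (by norm_num) (by norm_num) (by norm_num)
    have k3 := key 0 (-2) (-1) (-1) (by norm_num) (by norm_num) (by norm_num)
    have k4 := key 0 (-2) (-3) (-2) (by norm_num) (by norm_num) (by norm_num)
    have k5 := key 0 1 1 1 (by norm_num) (by norm_num) (by norm_num)
    refine ⟨by linarith, by linarith, by linarith, by linarith⟩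
  · rintro ⟨hs, h1, h2, h3⟩
    exact mem_convexHull_triple (a := 2*y 1 + y 2 - 1) (b := 4 - 4*y 1 - 4*y 2)
      (c := 2*y 1 + 3*y 2 - 2)
      (by linarith) (by linarith) (by linarith) (by ring)
      (by funext i; fin_cases i <;> simp [V2, VP, V3] <;> linarith)

lemma memMP {y : Fin 3 → ℝ} :
    y ∈ convexHull ℝ ({VM, VP} : Set (Fin 3 → ℝ)) ↔
      y 0 + y 1 + y 2 = 1 ∧ 2 * y 1 + y 2 = 1 ∧ 0 ≤ y 2 ∧ y 2 ≤ 1/2 := by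
  constructor
  · intro hy
    have key : ∀ c0 c1 c2 d : ℝ, c0/2 + c1/2 ≤ d → c0/4 + c1/4 + c2/2 ≤ d →
        c0 * y 0 + c1 * y 1 + c2 * y 2 ≤ d := by
      intro c0 c1 c2 d h1 h2
      refine hull_le c0 c1 c2 d (fun z hz => ?_) y hy
      simp only [Set.mem_insert_iff, Set.mem_singleton_iff] at hz
      rcases hz with rfl | rfl <;> simp [VM, VP] <;> linarith
    have k1 := key 1 1 1 1 (by norm_num) (by norm_num)
    have k2 := key (-1) (-1) (-1) (-1) (by norm_num) (by norm_num)
    have k3 := key 0 2 1 1 (by norm_num) (by norm_num)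
    have k4 := key 0 (-2) (-1) (-1) (by norm_num) (by norm_num)
    have k5 := key 0 0 (-1) 0 (by norm_num) (by norm_num)
    have k6 := key 0 0 1 (1/2) (by norm_num) (by norm_num)
    refine ⟨by linarith, by linarith, by linarith, by linarith⟩
  · rintro ⟨hs, h1, h2, h3⟩
    exact mem_convexHull_pair (a := 1 - 2*y 2) (b := 2*y 2)
      (by linarith) (by linarith) (by ring)
      (by funext i; fin_cases i <;> simp [VM, VP] <;> linarith)

lemma memP1P {y : Fin 3 → ℝ} :
    y ∈ convexHull ℝ ({V1, VP} : Set (Fin 3 → ℝ)) ↔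
      y 0 + y 1 + y 2 = 1 ∧ y 2 = 2 * y 1 ∧ 0 ≤ y 1 ∧ y 1 ≤ 1/4 := by
  constructor
  · intro hy
    have key : ∀ c0 c1 c2 d : ℝ, c0 ≤ d → c0/4 + c1/4 + c2/2 ≤ d →
        c0 * y 0 + c1 * y 1 + c2 * y 2 ≤ d := by
      intro c0 c1 c2 d h1 h2
      refine hull_le c0 c1 c2 d (fun z hz => ?_) y hy
      simp only [Set.mem_insert_iff, Set.mem_singleton_iff] at hz
      rcases hz with rfl | rfl <;> simp [V1, VP] <;> linarith
    have k1 := key 1 1 1 1 (by norm_num) (by norm_num)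
    have k2 := key (-1) (-1) (-1) (-1) (by norm_num) (by norm_num)
    have k3 := key 0 (-2) 1 0 (by norm_num) (by norm_num)
    have k4 := key 0 2 (-1) 0 (by norm_num) (by norm_num)
    have k5 := key 0 (-1) 0 0 (by norm_num) (by norm_num)
    have k6 := key 0 1 0 (1/4) (by norm_num) (by norm_num)
    refine ⟨by linarith, by linarith, by linarith, by linarith⟩
  · rintro ⟨hs, h1, h2, h3⟩
    exact mem_convexHull_pair (a := 1 - 4*y 1) (b := 4*y 1)
      (by linarith) (by linarith) (by ring)
      (by funext i; fin_cases i <;> simp [V1, VP] <;> linarith)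

lemma memP2P {y : Fin 3 → ℝ} :
    y ∈ convexHull ℝ ({V2, VP} : Set (Fin 3 → ℝ)) ↔
      y 0 + y 1 + y 2 = 1 ∧ 2 * y 1 + 3 * y 2 = 2 ∧ 0 ≤ y 2 ∧ y 2 ≤ 1/2 := by
  constructor
  · intro hy
    have key : ∀ c0 c1 c2 d : ℝ, c1 ≤ d → c0/4 + c1/4 + c2/2 ≤ d →
        c0 * y 0 + c1 * y 1 + c2 * y 2 ≤ d := by
      intro c0 c1 c2 d h1 h2
      refine hull_le c0 c1 c2 d (fun z hz => ?_) y hy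
      simp only [Set.mem_insert_iff, Set.mem_singleton_iff] at hz
      rcases hz with rfl | rfl <;> simp [V2, VP] <;> linarith
    have k1 := key 1 1 1 1 (by norm_num) (by norm_num)
    have k2 := key (-1) (-1) (-1) (-1) (by norm_num) (by norm_num)
    have k3 := key 0 2 3 2 (by norm_num) (by norm_num)
    have k4 := key 0 (-2) (-3) (-2) (by norm_num) (by norm_num)
    have k5 := key 0 0 (-1) 0 (by norm_num) (by norm_num)
    have k6 := key 0 0 1 (1/2) (by norm_num) (by norm_num)
    refine ⟨by linarith, by linarith, by linarith, by linarith⟩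
  · rintro ⟨hs, h1, h2, h3⟩
    exact mem_convexHull_pair (a := 1 - 2*y 2) (b := 2*y 2)
      (by linarith) (by linarith) (by ring)
      (by funext i; fin_cases i <;> simp [V2, VP] <;> linarith)

lemma memPV3 {y : Fin 3 → ℝ} :
    y ∈ convexHull ℝ ({VP, V3} : Set (Fin 3 → ℝ)) ↔
      y 0 + y 1 + y 2 = 1 ∧ 2 * y 1 + y 2 = 1 ∧ 1/2 ≤ y 2 ∧ y 2 ≤ 1 := by
  constructor
  · intro hy
    have key : ∀ c0 c1 c2 d : ℝ, c0/4 + c1/4 + c2/2 ≤ d → c2 ≤ d →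
        c0 * y 0 + c1 * y 1 + c2 * y 2 ≤ d := by
      intro c0 c1 c2 d h1 h2
      refine hull_le c0 c1 c2 d (fun z hz => ?_) y hy
      simp only [Set.mem_insert_iff, Set.mem_singleton_iff] at hz
      rcases hz with rfl | rfl <;> simp [VP, V3] <;> linarith
    have k1 := key 1 1 1 1 (by norm_num) (by norm_num)
    have k2 := key (-1) (-1) (-1) (-1) (by norm_num) (by norm_num)
    have k3 := key 0 2 1 1 (by norm_num) (by norm_num)
    have k4 := key 0 (-2) (-1) (-1) (by norm_num) (by norm_num)
    have k5 := key 0 0 (-1) (-1/2) (by norm_num) (by norm_num)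
    have k6 := key 0 0 1 1 (by norm_num) (by norm_num)
    refine ⟨by linarith, by linarith, by linarith, by linarith⟩
  · rintro ⟨hs, h1, h2, h3⟩
    exact mem_convexHull_pair (a := 2 - 2*y 2) (b := 2*y 2 - 1)
      (by linarith) (by linarith) (by ring)
      (by funext i; fin_cases i <;> simp [VP, V3] <;> linarith)
end
noncomputable section

def SA : Finset (Fin 3 → ℝ) := {V1, VM, VP}
def SB : Finset (Fin 3 → ℝ) := {V2, VM, VP}
def SC : Finset (Fin 3 → ℝ) := {V1, VP, V3}
def SD : Finset (Fin 3 → ℝ) := {V2, VP, V3}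
def SS : Finset (Finset (Fin 3 → ℝ)) := {SA, SB, SC, SD}
def lab : (Fin 3 → ℝ) → Fin 3 := fun v =>
  if v = V2 then 1 else if v = V3 then 2 else if v = VP then 1 else 0
def pt : Fin 3 → ℝ := ![1/8, 5/8, 1/4]

lemma coeTA : (↑SA : Set (Fin 3 → ℝ)) = {V1, VM, VP} := by simp [SA]
lemma coeTB : (↑SB : Set (Fin 3 → ℝ)) = {V2, VM, VP} := by simp [SB]
lemma coeTC : (↑SC : Set (Fin 3 → ℝ)) = {V1, VP, V3} := by simp [SC]
lemma coeTD : (↑SD : Set (Fin 3 → ℝ)) = {V2, VP, V3} := by simp [SD]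

lemma labV1 : lab V1 = 0 := by simp [lab, ne_V1V2, ne_V1V3, ne_V1VP]
lemma labV2 : lab V2 = 1 := by simp [lab]
lemma labV3 : lab V3 = 2 := by simp [lab, Ne.symm ne_V2V3]
lemma labVM : lab VM = 0 := by
  simp [lab, Ne.symm ne_V2VM, Ne.symm ne_V3VM, ne_VMVP]
lemma labVP : lab VP = 1 := by simp [lab, Ne.symm ne_V2VP, Ne.symm ne_V3VP]

lemma cardTA : SA.card = 3 := by
  rw [SA, Finset.card_insert_of_notMem (by simp [ne_V1VM, ne_V1VP]),
    Finset.card_insert_of_notMem (by simp [ne_VMVP]), Finset.card_singleton]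
lemma cardTB : SB.card = 3 := by
  rw [SB, Finset.card_insert_of_notMem (by simp [ne_V2VM, ne_V2VP]),
    Finset.card_insert_of_notMem (by simp [ne_VMVP]), Finset.card_singleton]
lemma cardTC : SC.card = 3 := by
  rw [SC, Finset.card_insert_of_notMem (by simp [ne_V1VP, ne_V1V3]),
    Finset.card_insert_of_notMem (by simp [ne_V3VP.symm]), Finset.card_singleton]
lemma cardTD : SD.card = 3 := by
  rw [SD, Finset.card_insert_of_notMem (by simp [ne_V2VP, ne_V2V3]),
    Finset.card_insert_of_notMem (by simp [ne_V3VP.symm]), Finset.card_singleton]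

lemma memStd {y : Fin 3 → ℝ} : y ∈ stdSimplex ℝ (Fin 3) ↔
    0 ≤ y 0 ∧ 0 ≤ y 1 ∧ 0 ≤ y 2 ∧ y 0 + y 1 + y 2 = 1 := by
  constructor
  · rintro ⟨h1, h2⟩
    rw [Fin.sum_univ_three] at h2
    exact ⟨h1 0, h1 1, h1 2, h2⟩
  · rintro ⟨h0, h1, h2, hs⟩
    refine ⟨fun i => ?_, by rw [Fin.sum_univ_three]; exact hs⟩
    fin_cases i <;> assumption

lemma affSet {S : Finset (Fin 3 → ℝ)} {P Q R : Fin 3 → ℝ}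
    (hS : (↑S : Set (Fin 3 → ℝ)) = {P, Q, R})
    (h : AffineIndependent ℝ ![P, Q, R]) :
    AffineIndependent ℝ ((↑) : S → (Fin 3 → ℝ)) := by
  have h1 : AffineIndependent ℝ
      (fun x => x : Set.range ![P, Q, R] → (Fin 3 → ℝ)) := h.range
  have h2 : Set.range ![P, Q, R] = (↑S : Set (Fin 3 → ℝ)) := by
    rw [hS]
    ext z
    simp [Matrix.range_cons, Matrix.range_empty]
    tauto
  rw [h2] at h1
  exact h1.comp_embedding
    ⟨fun x => ⟨x.1, x.2⟩, fun a b hab => Subtype.ext (congrArg Subtype.val hab)⟩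

lemma affTA : AffineIndependent ℝ ((↑) : SA → (Fin 3 → ℝ)) := by
  refine affSet coeTA (affineIndependent_triple ?_)
  intro a b c hs hv
  have h0 := congrFun hv 0
  have h1 := congrFun hv 1
  have h2 := congrFun hv 2
  simp [V1, VM, VP] at h0 h1 h2
  refine ⟨by linarith, by linarith, by linarith⟩
lemma affTB : AffineIndependent ℝ ((↑) : SB → (Fin 3 → ℝ)) := by
  refine affSet coeTB (affineIndependent_triple ?_)
  intro a b c hs hv
  have h0 := congrFun hv 0
  have h1 := congrFun hv 1
  have h2 := congrFun hv 2
  simp [V2, VM, VP] at h0 h1 h2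
  refine ⟨by linarith, by linarith, by linarith⟩
lemma affTC : AffineIndependent ℝ ((↑) : SC → (Fin 3 → ℝ)) := by
  refine affSet coeTC (affineIndependent_triple ?_)
  intro a b c hs hv
  have h0 := congrFun hv 0
  have h1 := congrFun hv 1
  have h2 := congrFun hv 2
  simp [V1, VP, V3] at h0 h1 h2
  refine ⟨by linarith, by linarith, by linarith⟩
lemma affTD : AffineIndependent ℝ ((↑) : SD → (Fin 3 → ℝ)) := by
  refine affSet coeTD (affineIndependent_triple ?_)
  intro a b c hs hv
  have h0 := congrFun hv 0
  have h1 := congrFun hv 1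
  have h2 := congrFun hv 2
  simp [V2, VP, V3] at h0 h1 h2
  refine ⟨by linarith, by linarith, by linarith⟩

lemma iAB : convexHull ℝ ({V1, VM, VP} : Set (Fin 3 → ℝ)) ∩
    convexHull ℝ ({V2, VM, VP} : Set (Fin 3 → ℝ)) =
    convexHull ℝ ({VM, VP} : Set (Fin 3 → ℝ)) := by
  ext y
  rw [Set.mem_inter_iff, memA, memB, memMP]
  constructor
  · rintro ⟨⟨hs, a1, a2, a3⟩, ⟨-, b1, b2, b3⟩⟩
    exact ⟨hs, by linarith, a1, by linarith⟩
  · rintro ⟨hs, e1, e2, e3⟩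
    exact ⟨⟨hs, e2, by linarith, by linarith⟩, ⟨hs, e2, by linarith, by linarith⟩⟩

lemma iAC : convexHull ℝ ({V1, VM, VP} : Set (Fin 3 → ℝ)) ∩
    convexHull ℝ ({V1, VP, V3} : Set (Fin 3 → ℝ)) =
    convexHull ℝ ({V1, VP} : Set (Fin 3 → ℝ)) := by
  ext y
  rw [Set.mem_inter_iff, memA, memC, memP1P]
  constructor
  · rintro ⟨⟨hs, a1, a2, a3⟩, ⟨-, c1, c2, c3⟩⟩
    exact ⟨hs, by linarith, c1, by linarith⟩
  · rintro ⟨hs, e1, e2, e3⟩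
    exact ⟨⟨hs, by linarith, by linarith, by linarith⟩,
      ⟨hs, e2, by linarith, by linarith⟩⟩

lemma iAD : convexHull ℝ ({V1, VM, VP} : Set (Fin 3 → ℝ)) ∩
    convexHull ℝ ({V2, VP, V3} : Set (Fin 3 → ℝ)) =
    convexHull ℝ ({VP} : Set (Fin 3 → ℝ)) := by
  ext y
  rw [Set.mem_inter_iff, memA, memD, convexHull_singleton, Set.mem_singleton_iff]
  constructor
  · rintro ⟨⟨hs, a1, a2, a3⟩, ⟨-, d1, d2, d3⟩⟩
    funext i
    fin_cases i <;> simp [VP] <;> linarith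
  · rintro rfl
    norm_num [VP, Matrix.cons_val_two, Matrix.tail_cons, Matrix.head_cons]

lemma iBC : convexHull ℝ ({V2, VM, VP} : Set (Fin 3 → ℝ)) ∩
    convexHull ℝ ({V1, VP, V3} : Set (Fin 3 → ℝ)) =
    convexHull ℝ ({VP} : Set (Fin 3 → ℝ)) := by
  ext y
  rw [Set.mem_inter_iff, memB, memC, convexHull_singleton, Set.mem_singleton_iff]
  constructor
  · rintro ⟨⟨hs, b1, b2, b3⟩, ⟨-, c1, c2, c3⟩⟩
    funext i
    fin_cases i <;> simp [VP] <;> linarith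
  · rintro rfl
    norm_num [VP, Matrix.cons_val_two, Matrix.tail_cons, Matrix.head_cons]

lemma iBD : convexHull ℝ ({V2, VM, VP} : Set (Fin 3 → ℝ)) ∩
    convexHull ℝ ({V2, VP, V3} : Set (Fin 3 → ℝ)) =
    convexHull ℝ ({V2, VP} : Set (Fin 3 → ℝ)) := by
  ext y
  rw [Set.mem_inter_iff, memB, memD, memP2P]
  constructor
  · rintro ⟨⟨hs, b1, b2, b3⟩, ⟨-, d1, d2, d3⟩⟩
    exact ⟨hs, by linarith, b1, by linarith⟩
  · rintro ⟨hs, e1, e2, e3⟩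
    exact ⟨⟨hs, e2, by linarith, by linarith⟩,
      ⟨hs, by linarith, by linarith, by linarith⟩⟩

lemma iCD : convexHull ℝ ({V1, VP, V3} : Set (Fin 3 → ℝ)) ∩
    convexHull ℝ ({V2, VP, V3} : Set (Fin 3 → ℝ)) =
    convexHull ℝ ({VP, V3} : Set (Fin 3 → ℝ)) := by
  ext y
  rw [Set.mem_inter_iff, memC, memD, memPV3]
  constructor
  · rintro ⟨⟨hs, c1, c2, c3⟩, ⟨-, d1, d2, d3⟩⟩
    exact ⟨hs, by linarith, by linarith, by linarith⟩
  · rintro ⟨hs, e1, e2, e3⟩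
    exact ⟨⟨hs, by linarith, by linarith, by linarith⟩,
      ⟨hs, by linarith, by linarith, by linarith⟩⟩
end

lemma memSS {S : Finset (Fin 3 → ℝ)} (hS : S ∈ SS) :
    S = SA ∨ S = SB ∨ S = SC ∨ S = SD := by simpa [SS] using hS

lemma ptB : pt ∈ convexHull ℝ (↑SB : Set (Fin 3 → ℝ)) := by
  rw [coeTB, memB]; norm_num [pt, Matrix.cons_val_two, Matrix.tail_cons, Matrix.head_cons]

lemma ptD : pt ∈ convexHull ℝ (↑SD : Set (Fin 3 → ℝ)) := by
  rw [coeTD, memD]; norm_num [pt, Matrix.cons_val_two, Matrix.tail_cons, Matrix.head_cons]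

theorem main :
    ∃ (𝒮 : Finset (Finset (Fin 3 → ℝ))) (ℓ : (Fin 3 → ℝ) → Fin 3) (x : Fin 3 → ℝ),
      (∀ S ∈ 𝒮, S.card = 3 ∧ AffineIndependent ℝ ((↑) : S → (Fin 3 → ℝ)) ∧
        (↑S : Set (Fin 3 → ℝ)) ⊆ stdSimplex ℝ (Fin 3)) ∧
      (⋃ S ∈ 𝒮, convexHull ℝ (↑S : Set (Fin 3 → ℝ))) = stdSimplex ℝ (Fin 3) ∧
      (∀ S ∈ 𝒮, ∀ T ∈ 𝒮,
        convexHull ℝ (↑S : Set (Fin 3 → ℝ)) ∩ convexHull ℝ (↑T : Set (Fin 3 → ℝ)) = ∅ ∨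
        ∃ F : Finset (Fin 3 → ℝ), F ⊆ S ∧ F ⊆ T ∧
          convexHull ℝ (↑S : Set (Fin 3 → ℝ)) ∩ convexHull ℝ (↑T : Set (Fin 3 → ℝ)) =
            convexHull ℝ (↑F : Set (Fin 3 → ℝ))) ∧
      (∀ S ∈ 𝒮, ∀ v ∈ S, 0 < v (ℓ v)) ∧
      (∀ i : Fin 3, ∃ S ∈ 𝒮, x ∈ convexHull ℝ (↑S : Set (Fin 3 → ℝ)) ∧
        ∃ v ∈ S, ℓ v = i) ∧
      (∀ S ∈ 𝒮, (∀ i : Fin 3, ∃ v ∈ S, ℓ v = i) →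
        x ∉ convexHull ℝ (↑S : Set (Fin 3 → ℝ))) := by
  refine ⟨SS, lab, pt, ?_, ?_, ?_, ?_, ?_, ?_⟩
  · -- cards, affine independence, inside simplex
    intro S hS
    rcases memSS hS with rfl | rfl | rfl | rfl
    · refine ⟨cardTA, affTA, ?_⟩
      rw [coeTA]
      rintro y hy
      simp only [Set.mem_insert_iff, Set.mem_singleton_iff] at hy
      rcases hy with rfl | rfl | rfl <;> rw [memStd] <;> norm_num [V1, VM, VP, Matrix.cons_val_two, Matrix.tail_cons, Matrix.head_cons]
    · refine ⟨cardTB, affTB, ?_⟩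
      rw [coeTB]
      rintro y hy
      simp only [Set.mem_insert_iff, Set.mem_singleton_iff] at hy
      rcases hy with rfl | rfl | rfl <;> rw [memStd] <;> norm_num [V2, VM, VP, Matrix.cons_val_two, Matrix.tail_cons, Matrix.head_cons]
    · refine ⟨cardTC, affTC, ?_⟩
      rw [coeTC]
      rintro y hy
      simp only [Set.mem_insert_iff, Set.mem_singleton_iff] at hy
      rcases hy with rfl | rfl | rfl <;> rw [memStd] <;> norm_num [V1, VP, V3, Matrix.cons_val_two, Matrix.tail_cons, Matrix.head_cons]
    · refine ⟨cardTD, affTD, ?_⟩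
      rw [coeTD]
      rintro y hy
      simp only [Set.mem_insert_iff, Set.mem_singleton_iff] at hy
      rcases hy with rfl | rfl | rfl <;> rw [memStd] <;> norm_num [V2, VP, V3, Matrix.cons_val_two, Matrix.tail_cons, Matrix.head_cons]
  · -- union
    ext y
    simp only [Set.mem_iUnion, exists_prop]
    constructor
    · rintro ⟨S, hS, hy⟩
      rcases memSS hS with rfl | rfl | rfl | rfl
      · rw [coeTA, memA] at hy
        rw [memStd]
        obtain ⟨hs, h1, h2, h3⟩ := hy
        refine ⟨by linarith, by linarith, by linarith, hs⟩
      · rw [coeTB, memB] at hy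
        rw [memStd]
        obtain ⟨hs, h1, h2, h3⟩ := hy
        refine ⟨by linarith, by linarith, by linarith, hs⟩
      · rw [coeTC, memC] at hy
        rw [memStd]
        obtain ⟨hs, h1, h2, h3⟩ := hy
        refine ⟨by linarith, by linarith, by linarith, hs⟩
      · rw [coeTD, memD] at hy
        rw [memStd]
        obtain ⟨hs, h1, h2, h3⟩ := hy
        refine ⟨by linarith, by linarith, by linarith, hs⟩
    · intro hy
      rw [memStd] at hy
      obtain ⟨h0, h1, h2, hs⟩ := hy
      by_cases hAB : 2 * y 1 + y 2 ≤ 1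
      · by_cases hAC : y 2 ≤ 2 * y 1
        · exact ⟨SA, by simp [SS], by rw [coeTA, memA]; exact ⟨hs, h2, hAC, hAB⟩⟩
        · exact ⟨SC, by simp [SS],
            by rw [coeTC, memC]; exact ⟨hs, h1, by linarith, hAB⟩⟩
      · by_cases hBD : 2 * y 1 + 3 * y 2 ≤ 2
        · exact ⟨SB, by simp [SS],
            by rw [coeTB, memB]; exact ⟨hs, h2, by linarith, hBD⟩⟩
        · exact ⟨SD, by simp [SS],
            by rw [coeTD, memD]; exact ⟨hs, by linarith, by linarith, by linarith⟩⟩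
  · -- pairwise intersections
    intro S hS T hT
    rcases memSS hS with rfl | rfl | rfl | rfl <;>
      rcases memSS hT with rfl | rfl | rfl | rfl
    · exact Or.inr ⟨SA, Finset.Subset.refl _, Finset.Subset.refl _, by rw [Set.inter_self]⟩
    · exact Or.inr ⟨{VM, VP}, by simp [SA, Finset.insert_subset_iff],
        by simp [SB, Finset.insert_subset_iff],
        by rw [coeTA, coeTB]; simpa using iAB⟩
    · exact Or.inr ⟨{V1, VP}, by simp [SA, Finset.insert_subset_iff],
        by simp [SC, Finset.insert_subset_iff],
        by rw [coeTA, coeTC]; simpa using iAC⟩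
    · exact Or.inr ⟨{VP}, by simp [SA], by simp [SD],
        by rw [coeTA, coeTD]; simpa using iAD⟩
    · exact Or.inr ⟨{VM, VP}, by simp [SB, Finset.insert_subset_iff],
        by simp [SA, Finset.insert_subset_iff],
        by rw [coeTA, coeTB, Set.inter_comm]; simpa using iAB⟩
    · exact Or.inr ⟨SB, Finset.Subset.refl _, Finset.Subset.refl _, by rw [Set.inter_self]⟩
    · exact Or.inr ⟨{VP}, by simp [SB], by simp [SC],
        by rw [coeTB, coeTC]; simpa using iBC⟩
    · exact Or.inr ⟨{V2, VP}, by simp [SB, Finset.insert_subset_iff],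
        by simp [SD, Finset.insert_subset_iff],
        by rw [coeTB, coeTD]; simpa using iBD⟩
    · exact Or.inr ⟨{V1, VP}, by simp [SC, Finset.insert_subset_iff],
        by simp [SA, Finset.insert_subset_iff],
        by rw [coeTA, coeTC, Set.inter_comm]; simpa using iAC⟩
    · exact Or.inr ⟨{VP}, by simp [SC], by simp [SB],
        by rw [coeTB, coeTC, Set.inter_comm]; simpa using iBC⟩
    · exact Or.inr ⟨SC, Finset.Subset.refl _, Finset.Subset.refl _, by rw [Set.inter_self]⟩
    · exact Or.inr ⟨{VP, V3}, by simp [SC, Finset.insert_subset_iff],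
        by simp [SD, Finset.insert_subset_iff],
        by rw [coeTC, coeTD]; simpa using iCD⟩
    · exact Or.inr ⟨{VP}, by simp [SD], by simp [SA],
        by rw [coeTA, coeTD, Set.inter_comm]; simpa using iAD⟩
    · exact Or.inr ⟨{V2, VP}, by simp [SD, Finset.insert_subset_iff],
        by simp [SB, Finset.insert_subset_iff],
        by rw [coeTB, coeTD, Set.inter_comm]; simpa using iBD⟩
    · exact Or.inr ⟨{VP, V3}, by simp [SD, Finset.insert_subset_iff],
        by simp [SC, Finset.insert_subset_iff],
        by rw [coeTC, coeTD, Set.inter_comm]; simpa using iCD⟩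
    · exact Or.inr ⟨SD, Finset.Subset.refl _, Finset.Subset.refl _, by rw [Set.inter_self]⟩
  · -- Sperner labeling
    intro S hS v hv
    rcases memSS hS with rfl | rfl | rfl | rfl <;>
      simp only [SA, SB, SC, SD, Finset.mem_insert, Finset.mem_singleton] at hv <;>
      rcases hv with rfl | rfl | rfl <;>
      simp only [labV1, labV2, labV3, labVM, labVP] <;>
      norm_num [V1, V2, V3, VM, VP, Matrix.cons_val_two, Matrix.tail_cons, Matrix.head_cons]
  · -- each label appears in a simplex containing pt
    intro i
    fin_cases i
    · exact ⟨SB, by simp [SS], ptB, VM, by simp [SB], labVM⟩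
    · exact ⟨SB, by simp [SS], ptB, V2, by simp [SB], labV2⟩
    · exact ⟨SD, by simp [SS], ptD, V3, by simp [SD], labV3⟩
  · -- no completely labeled simplex contains pt
    intro S hS hcl
    rcases memSS hS with rfl | rfl | rfl | rfl
    · obtain ⟨v, hv, hlv⟩ := hcl 2
      simp only [SA, Finset.mem_insert, Finset.mem_singleton] at hv
      rcases hv with rfl | rfl | rfl <;>
        simp only [labV1, labVM, labVP] at hlv <;> exact absurd hlv (by decide)
    · obtain ⟨v, hv, hlv⟩ := hcl 2
      simp only [SB, Finset.mem_insert, Finset.mem_singleton] at hv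
      rcases hv with rfl | rfl | rfl <;>
        simp only [labV2, labVM, labVP] at hlv <;> exact absurd hlv (by decide)
    · rw [coeTC, memC]
      norm_num [pt, Matrix.cons_val_two, Matrix.tail_cons, Matrix.head_cons]
    · obtain ⟨v, hv, hlv⟩ := hcl 0
      simp only [SD, Finset.mem_insert, Finset.mem_singleton] at hv
      rcases hv with rfl | rfl | rfl <;>
        simp only [labV2, labV3, labVP] at hlv <;> exact absurd hlv (by decide)


theorem naive_approach_counterexample :
    ∃ (𝒮 : Finset (Finset (Fin 3 → ℝ))) (ℓ : (Fin 3 → ℝ) → Fin 3) (x : Fin 3 → ℝ),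
      IsSubdivision 3 𝒮 ∧ IsSpernerLabeling 3 𝒮 ℓ ∧
      (∀ i : Fin 3, ∃ S ∈ 𝒮, x ∈ convexHull ℝ (↑S : Set (Fin 3 → ℝ)) ∧
        ∃ v ∈ S, ℓ v = i) ∧
      (∀ S ∈ 𝒮, IsCompletelyLabeled 3 S ℓ →
        x ∉ convexHull ℝ (↑S : Set (Fin 3 → ℝ))) := by
  obtain ⟨S, l, x, h1, h2, h3, h4, h5, h6⟩ := main
  exact ⟨S, l, x, ⟨h1, h2, h3⟩, h4, h5, h6⟩
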